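/- Let 𝒞 be a conic in the real projective plane, given as the zero locus of a nondegenerate quadratic form on ℝ³, and let ABC and A'B'C' be two triangles inscribed in 𝒞 (all six points on 𝒞, each triple noncollinear, the six points pairwise distinct). Suppose ABC is perspective with A'B'C' with perspector Q₁ (lines AA', BB', CC' pass through Q₁) and ABC is perspective with C'A'B' with perspector Q₃ (lines AC', BA', CB' pass through Q₃), with Q₁ ≠ Q₃. Let P₁ be the intersection of the tangent line to 𝒞 at A with line BC, and P₂ the intersection of the tangent line to 𝒞 at B with line CA. Then P₁ and P₂ both lie on the line Q₁Q₃; that is, the line through the perspectors coincides with the Hessian line of ABC with respect to 𝒞. -/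

import Mathlib

/-- Three points of the real projective plane are collinear if (some, equivalently any)
homogeneous representatives of them are linearly dependent. -/
def Collin (X Y Z : Projectivization ℝ (Fin 3 → ℝ)) : Prop :=
  ¬ LinearIndependent ℝ ![X.rep, Y.rep, Z.rep]

/-- A point of the real projective plane lies on the conic cut out by the quadratic form `q`. -/
def OnConic (q : QuadraticForm ℝ (Fin 3 → ℝ)) (X : Projectivization ℝ (Fin 3 → ℝ)) : Prop :=
  q X.rep = 0

private lemma key_alg (α β γ x₁ y₁ z₁ x₂ y₂ z₂ x₃ y₃ z₃ : ℝ)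
    (hE1 : γ*x₁*y₁ + α*y₁*z₁ + β*x₁*z₁ = 0)
    (hE2 : γ*x₂*y₂ + α*y₂*z₂ + β*x₂*z₂ = 0)
    (hE3 : γ*x₃*y₃ + α*y₃*z₃ + β*x₃*z₃ = 0)
    (hP1 : x₂*y₃*z₁ - x₃*y₁*z₂ = 0)
    (hP2 : x₁*y₂*z₃ - x₂*y₃*z₁ = 0)
    (hα : α ≠ 0) (hβ : β ≠ 0)
    (hx₁ : x₁ ≠ 0) (hx₂ : x₂ ≠ 0) (hx₃ : x₃ ≠ 0)
    (hy₁ : y₁ ≠ 0) (hy₂ : y₂ ≠ 0)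
    (hz₁ : z₁ ≠ 0) (hz₂ : z₂ ≠ 0) (hz₃ : z₃ ≠ 0)
    (hD : x₁*y₂ - x₂*y₁ ≠ 0) :
    (β*γ*(x₂*z₁) + γ*α*(y₁*z₂) + α*β*(z₁*z₂) = 0) ∧
    (β*γ*(x₁*z₃) + γ*α*(y₃*z₁) + α*β*(z₁*z₃) = 0) := by
  have hAcl : α*y₂*(α*y₁+β*x₁)*(β*x₃) - α*y₃*(α*y₂+β*x₂)*(β*x₁) = 0 := by
    have h : (α*y₂*(α*y₁+β*x₁)*(β*x₃) - α*y₃*(α*y₂+β*x₂)*(β*x₁)) * (z₁*z₂) = 0 := by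
      linear_combination (α*β*y₂*x₃*z₂)*hE1 - (α*β*y₃*x₁*z₁)*hE2 + (α*β*γ*x₁*y₂)*hP1
    exact (mul_eq_zero.mp h).resolve_right (mul_ne_zero hz₁ hz₂)
  have hBcl : α*y₂*(α*y₁+β*x₁)*(β*x₃) - α*y₁*(α*y₃+β*x₃)*(β*x₂) = 0 := by
    have h : (α*y₂*(α*y₁+β*x₁)*(β*x₃) - α*y₁*(α*y₃+β*x₃)*(β*x₂)) * (z₁*z₃) = 0 := by
      linear_combination (α*β*y₂*x₃*z₃)*hE1 - (α*β*y₁*x₂*z₁)*hE3 - (α*β*γ*x₃*y₁)*hP2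
    exact (mul_eq_zero.mp h).resolve_right (mul_ne_zero hz₁ hz₃)
  have hQ : α*y₂*(α*y₁+β*x₁) + β^2*x₁*x₂ = 0 := by
    have h : (α*y₂*(α*y₁+β*x₁) + β^2*x₁*x₂) * ((α*β*(x₁*y₂ - x₂*y₁))*(β*x₃)) = 0 := by
      linear_combination ((α*y₂+β*x₂)*(β*x₁))*hBcl - (α*y₁*β*x₂)*hAcl
    exact (mul_eq_zero.mp h).resolve_right
      (mul_ne_zero (mul_ne_zero (mul_ne_zero hα hβ) hD) (mul_ne_zero hβ hx₃))
  have hQ2 : α*y₁*(α*y₃+β*x₃) + β^2*x₁*x₃ = 0 := by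
    have h : (α*y₁*(α*y₃+β*x₃) + β^2*x₁*x₃) * (β*x₂) = 0 := by
      linear_combination (β*x₃)*hQ - hBcl
    exact (mul_eq_zero.mp h).resolve_right (mul_ne_zero hβ hx₂)
  have hK1 : α*γ*y₁*y₂ - β^2*x₂*z₁ = 0 := by
    have h : (α*γ*y₁*y₂ - β^2*x₂*z₁) * x₁ = 0 := by
      linear_combination (α*y₂)*hE1 - z₁*hQ
    exact (mul_eq_zero.mp h).resolve_right hx₁
  have hK2 : α*γ*y₁*y₃ - β^2*x₁*z₃ = 0 := by
    have h : (α*γ*y₁*y₃ - β^2*x₁*z₃) * x₃ = 0 := by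
      linear_combination (α*y₁)*hE3 - z₃*hQ2
    exact (mul_eq_zero.mp h).resolve_right hx₃
  constructor
  · have h : (β*γ*(x₂*z₁) + γ*α*(y₁*z₂) + α*β*(z₁*z₂)) * y₂ = 0 := by
      linear_combination β*z₁*hE2 + z₂*hK1
    exact (mul_eq_zero.mp h).resolve_right hy₂
  · have h : (β*γ*(x₁*z₃) + γ*α*(y₃*z₁) + α*β*(z₁*z₃)) * y₁ = 0 := by
      linear_combination β*z₃*hE1 + z₁*hK2
    exact (mul_eq_zero.mp h).resolve_right hy₁

private lemma aux_row_mul (M N : Matrix (Fin 3) (Fin 3) ℝ) (i : Fin 3) :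
    (N * M) i = Matrix.vecMul (N i) M := by
  funext j
  simp [Matrix.mul_apply, Matrix.vecMul, dotProduct]

private lemma aux_recon (M : Matrix (Fin 3) (Fin 3) ℝ) (hM : IsUnit M) (v : Fin 3 → ℝ) :
    Matrix.vecMul (Matrix.vecMul v M⁻¹) M = v := by
  rw [Matrix.vecMul_vecMul, Matrix.nonsing_inv_mul M ((Matrix.isUnit_iff_isUnit_det M).mp hM),
    Matrix.vecMul_one]

private lemma aux_vecMul_expand (M : Matrix (Fin 3) (Fin 3) ℝ) (c : Fin 3 → ℝ) :
    Matrix.vecMul c M = c 0 • M 0 + c 1 • M 1 + c 2 • M 2 := by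
  funext j
  simp [Matrix.vecMul, dotProduct, Fin.sum_univ_three]

private lemma aux_collin (M : Matrix (Fin 3) (Fin 3) ℝ) (hM : IsUnit M) (v₀ v₁ v₂ : Fin 3 → ℝ) :
    (¬ LinearIndependent ℝ ![v₀, v₁, v₂]) ↔
      (Matrix.of ![Matrix.vecMul v₀ M⁻¹, Matrix.vecMul v₁ M⁻¹, Matrix.vecMul v₂ M⁻¹]).det = 0 := by
  have hfac : (Matrix.of ![v₀, v₁, v₂] : Matrix (Fin 3) (Fin 3) ℝ)
      = Matrix.of ![Matrix.vecMul v₀ M⁻¹, Matrix.vecMul v₁ M⁻¹, Matrix.vecMul v₂ M⁻¹] * M := by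
    funext i
    fin_cases i
    · rw [aux_row_mul]
      show v₀ = Matrix.vecMul (Matrix.vecMul v₀ M⁻¹) M
      exact (aux_recon M hM v₀).symm
    · rw [aux_row_mul]
      show v₁ = Matrix.vecMul (Matrix.vecMul v₁ M⁻¹) M
      exact (aux_recon M hM v₁).symm
    · rw [aux_row_mul]
      show v₂ = Matrix.vecMul (Matrix.vecMul v₂ M⁻¹) M
      exact (aux_recon M hM v₂).symm
  have hli : LinearIndependent ℝ ![v₀, v₁, v₂] ↔ IsUnit (Matrix.of ![v₀, v₁, v₂]) :=
    Matrix.linearIndependent_rows_iff_isUnit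
  rw [not_congr hli, Matrix.isUnit_iff_isUnit_det, isUnit_iff_ne_zero, not_ne_iff, hfac,
    Matrix.det_mul]
  have hMd : M.det ≠ 0 := by
    rw [← isUnit_iff_ne_zero, ← Matrix.isUnit_iff_isUnit_det]; exact hM
  constructor
  · intro h; exact (mul_eq_zero.mp h).resolve_right hMd
  · intro h; rw [h, zero_mul]

private lemma aux_dep (l₀ l₁ l₂ g₀ g₁ g₂ h₀ h₁ h₂ w₀ w₁ w₂ : ℝ) (hl : l₀ ≠ 0)
    (r1 : l₀*g₀ + l₁*g₁ + l₂*g₂ = 0) (r2 : l₀*h₀ + l₁*h₁ + l₂*h₂ = 0)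
    (r3 : l₀*w₀ + l₁*w₁ + l₂*w₂ = 0) :
    (Matrix.of ![![g₀, g₁, g₂], ![h₀, h₁, h₂], ![w₀, w₁, w₂]]).det = 0 := by
  have h : (g₀*(h₁*w₂ - h₂*w₁) - g₁*(h₀*w₂ - h₂*w₀) + g₂*(h₀*w₁ - h₁*w₀)) * l₀ = 0 := by
    linear_combination (h₁*w₂ - h₂*w₁)*r1 - (g₁*w₂ - g₂*w₁)*r2 + (g₁*h₂ - g₂*h₁)*r3
  have h2 := (mul_eq_zero.mp h).resolve_right hl
  rw [Matrix.det_fin_three]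
  simp only [Matrix.of_apply, Matrix.cons_val', Matrix.cons_val_zero, Matrix.cons_val_one,
    Matrix.head_cons, Matrix.empty_val', Matrix.cons_val_fin_one, Matrix.head_fin_const,
    Matrix.cons_val_two, Matrix.tail_cons]
  linear_combination h2
set_option maxHeartbeats 2000000 in
theorem perspectors_line_eq_hessian_line
    (q : QuadraticForm ℝ (Fin 3 → ℝ))
    (hq : LinearMap.BilinForm.Nondegenerate (QuadraticMap.polarBilin q))
    (A B C A' B' C' : Projectivization ℝ (Fin 3 → ℝ))
    (hA : OnConic q A) (hB : OnConic q B) (hC : OnConic q C)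
    (hA' : OnConic q A') (hB' : OnConic q B') (hC' : OnConic q C')
    (hABC : ¬ Collin A B C) (hA'B'C' : ¬ Collin A' B' C')
    (hdistinct : List.Pairwise (· ≠ ·) [A, B, C, A', B', C'])
    (Q₁ Q₃ : Projectivization ℝ (Fin 3 → ℝ)) (hQ₁Q₃ : Q₁ ≠ Q₃)
    (hQ₁ : Collin A A' Q₁ ∧ Collin B B' Q₁ ∧ Collin C C' Q₁)
    (hQ₃ : Collin A C' Q₃ ∧ Collin B A' Q₃ ∧ Collin C B' Q₃)
    (P₁ P₂ : Projectivization ℝ (Fin 3 → ℝ))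
    -- `P₁` is the intersection of the tangent line to the conic at `A` with the line `BC`
    (hP₁ : QuadraticMap.polarBilin q A.rep P₁.rep = 0 ∧ Collin B C P₁)
    -- `P₂` is the intersection of the tangent line to the conic at `B` with the line `CA`
    (hP₂ : QuadraticMap.polarBilin q B.rep P₂.rep = 0 ∧ Collin C A P₂) :
    Collin Q₁ Q₃ P₁ ∧ Collin Q₁ Q₃ P₂ := by
  classical
  simp only [List.pairwise_cons, List.mem_cons, List.mem_singleton, List.not_mem_nil]
    at hdistinct
  have hAA' : A ≠ A' := hdistinct.1 A' (by tauto)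
  have hBA' : B ≠ A' := hdistinct.2.1 A' (by tauto)
  have hCA' : C ≠ A' := hdistinct.2.2.1 A' (by tauto)
  have hAB' : A ≠ B' := hdistinct.1 B' (by tauto)
  have hBB' : B ≠ B' := hdistinct.2.1 B' (by tauto)
  have hCB' : C ≠ B' := hdistinct.2.2.1 B' (by tauto)
  have hAC' : A ≠ C' := hdistinct.1 C' (by tauto)
  have hBC' : B ≠ C' := hdistinct.2.1 C' (by tauto)
  have hCC' : C ≠ C' := hdistinct.2.2.1 C' (by tauto)
  have hA'B' : A' ≠ B' := hdistinct.2.2.2.1 B' (by tauto)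
  have hli : LinearIndependent ℝ ![A.rep, B.rep, C.rep] := not_not.mp hABC
  set M : Matrix (Fin 3) (Fin 3) ℝ := Matrix.of ![A.rep, B.rep, C.rep] with hMdef
  have hMu : IsUnit M := Matrix.linearIndependent_rows_iff_isUnit.mp hli
  have hdecomp : ∀ v : Fin 3 → ℝ,
      v = Matrix.vecMul v M⁻¹ 0 • A.rep + Matrix.vecMul v M⁻¹ 1 • B.rep
        + Matrix.vecMul v M⁻¹ 2 • C.rep := by
    intro v
    have h := aux_recon M hMu v
    rw [aux_vecMul_expand, show M 0 = A.rep from rfl, show M 1 = B.rep from rfl,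
      show M 2 = C.rep from rfl] at h
    exact h.symm
  have co_a : Matrix.vecMul A.rep M⁻¹ = ![1, 0, 0] := by
    have h := aux_row_mul M⁻¹ M 0
    rw [Matrix.mul_nonsing_inv M ((Matrix.isUnit_iff_isUnit_det M).mp hMu),
      show M 0 = A.rep from rfl] at h
    rw [← h]
    funext j; fin_cases j <;> simp [Matrix.one_apply]
  have co_b : Matrix.vecMul B.rep M⁻¹ = ![0, 1, 0] := by
    have h := aux_row_mul M⁻¹ M 1
    rw [Matrix.mul_nonsing_inv M ((Matrix.isUnit_iff_isUnit_det M).mp hMu),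
      show M 1 = B.rep from rfl] at h
    rw [← h]
    funext j; fin_cases j <;> simp [Matrix.one_apply]
  have co_c : Matrix.vecMul C.rep M⁻¹ = ![0, 0, 1] := by
    have h := aux_row_mul M⁻¹ M 2
    rw [Matrix.mul_nonsing_inv M ((Matrix.isUnit_iff_isUnit_det M).mp hMu),
      show M 2 = C.rep from rfl] at h
    rw [← h]
    funext j; fin_cases j <;> simp [Matrix.one_apply]
  have co_zero : ∀ X : Projectivization ℝ (Fin 3 → ℝ), Matrix.vecMul X.rep M⁻¹ ≠ 0 := by
    intro X h0
    have h := aux_recon M hMu X.rep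
    rw [h0, Matrix.zero_vecMul] at h
    exact X.rep_nonzero h.symm
  have proj_eq : ∀ (X Y : Projectivization ℝ (Fin 3 → ℝ)) (t : ℝ), t ≠ 0 →
      Matrix.vecMul X.rep M⁻¹ = t • Matrix.vecMul Y.rep M⁻¹ → X = Y := by
    intro X Y t ht hco
    have hrep : X.rep = t • Y.rep := by
      have h1 := aux_recon M hMu X.rep
      rw [hco, Matrix.smul_vecMul, aux_recon M hMu Y.rep] at h1
      exact h1.symm
    rw [← Projectivization.mk_rep X, ← Projectivization.mk_rep Y,
      Projectivization.mk_eq_mk_iff]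
    refine ⟨Units.mk0 t ht, ?_⟩
    rw [hrep]
    simp [Units.smul_def]

  have point_eqA : ∀ X : Projectivization ℝ (Fin 3 → ℝ),
      Matrix.vecMul X.rep M⁻¹ 1 = 0 → Matrix.vecMul X.rep M⁻¹ 2 = 0 → X = A := by
    intro X h1 h2
    have ht : Matrix.vecMul X.rep M⁻¹ 0 ≠ 0 := by
      intro h0
      apply co_zero X
      funext j; fin_cases j <;> simp [h0, h1, h2]
    refine proj_eq X A _ ht ?_
    rw [co_a]
    funext j; fin_cases j <;> simp [h1, h2]
  have point_eqB : ∀ X : Projectivization ℝ (Fin 3 → ℝ),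
      Matrix.vecMul X.rep M⁻¹ 0 = 0 → Matrix.vecMul X.rep M⁻¹ 2 = 0 → X = B := by
    intro X h1 h2
    have ht : Matrix.vecMul X.rep M⁻¹ 1 ≠ 0 := by
      intro h0
      apply co_zero X
      funext j; fin_cases j <;> simp [h0, h1, h2]
    refine proj_eq X B _ ht ?_
    rw [co_b]
    funext j; fin_cases j <;> simp [h1, h2]
  have point_eqC : ∀ X : Projectivization ℝ (Fin 3 → ℝ),
      Matrix.vecMul X.rep M⁻¹ 0 = 0 → Matrix.vecMul X.rep M⁻¹ 1 = 0 → X = C := by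
    intro X h1 h2
    have ht : Matrix.vecMul X.rep M⁻¹ 2 ≠ 0 := by
      intro h0
      apply co_zero X
      funext j; fin_cases j <;> simp [h0, h1, h2]
    refine proj_eq X C _ ht ?_
    rw [co_c]
    funext j; fin_cases j <;> simp [h1, h2]
  -- the bilinear form values on the basis
  have hpolar : ∀ v w : Fin 3 → ℝ,
      ((QuadraticMap.polarBilin q) v) w = ((QuadraticMap.polarBilin q) w) v := by
    intro v w
    rw [QuadraticMap.polarBilin_apply_apply, QuadraticMap.polarBilin_apply_apply]
    exact QuadraticMap.polar_comm _ v w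
  have hself : ∀ v : Fin 3 → ℝ, q v = 0 → ((QuadraticMap.polarBilin q) v) v = 0 := by
    intro v hv
    rw [QuadraticMap.polarBilin_apply_apply, QuadraticMap.polar_self, hv, smul_zero]
  obtain ⟨γ, hab⟩ : ∃ t, ((QuadraticMap.polarBilin q) A.rep) B.rep = t := ⟨_, rfl⟩
  obtain ⟨α, hbc⟩ : ∃ t, ((QuadraticMap.polarBilin q) B.rep) C.rep = t := ⟨_, rfl⟩
  obtain ⟨β, hca⟩ : ∃ t, ((QuadraticMap.polarBilin q) C.rep) A.rep = t := ⟨_, rfl⟩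
  have hba : ((QuadraticMap.polarBilin q) B.rep) A.rep = γ := (hpolar B.rep A.rep).trans hab
  have hcb : ((QuadraticMap.polarBilin q) C.rep) B.rep = α := (hpolar C.rep B.rep).trans hbc
  have hac : ((QuadraticMap.polarBilin q) A.rep) C.rep = β := (hpolar A.rep C.rep).trans hca
  have haa : ((QuadraticMap.polarBilin q) A.rep) A.rep = 0 := hself _ hA
  have hbb : ((QuadraticMap.polarBilin q) B.rep) B.rep = 0 := hself _ hB
  have hcc : ((QuadraticMap.polarBilin q) C.rep) C.rep = 0 := hself _ hC
  have hBl_eval : ∀ v w : Fin 3 → ℝ, ((QuadraticMap.polarBilin q) v) w =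
      γ * (Matrix.vecMul v M⁻¹ 0 * Matrix.vecMul w M⁻¹ 1
            + Matrix.vecMul v M⁻¹ 1 * Matrix.vecMul w M⁻¹ 0)
      + α * (Matrix.vecMul v M⁻¹ 1 * Matrix.vecMul w M⁻¹ 2
            + Matrix.vecMul v M⁻¹ 2 * Matrix.vecMul w M⁻¹ 1)
      + β * (Matrix.vecMul v M⁻¹ 2 * Matrix.vecMul w M⁻¹ 0
            + Matrix.vecMul v M⁻¹ 0 * Matrix.vecMul w M⁻¹ 2) := by
    intro v w
    conv_lhs => rw [hdecomp v, hdecomp w]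
    simp only [map_add, map_smul, LinearMap.add_apply, LinearMap.smul_apply, smul_eq_mul]
    rw [haa, hbb, hcc, hab, hba, hbc, hcb, hca, hac]
    ring

  -- coordinates of the six remaining points
  obtain ⟨x₁, y₁, z₁, hcA'⟩ : ∃ x y z, Matrix.vecMul A'.rep M⁻¹ = ![x, y, z] :=
    ⟨_, _, _, by funext j; fin_cases j <;> rfl⟩
  obtain ⟨x₂, y₂, z₂, hcB'⟩ : ∃ x y z, Matrix.vecMul B'.rep M⁻¹ = ![x, y, z] :=
    ⟨_, _, _, by funext j; fin_cases j <;> rfl⟩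
  obtain ⟨x₃, y₃, z₃, hcC'⟩ : ∃ x y z, Matrix.vecMul C'.rep M⁻¹ = ![x, y, z] :=
    ⟨_, _, _, by funext j; fin_cases j <;> rfl⟩
  obtain ⟨g₀, g₁, g₂, hcQ₁⟩ : ∃ x y z, Matrix.vecMul Q₁.rep M⁻¹ = ![x, y, z] :=
    ⟨_, _, _, by funext j; fin_cases j <;> rfl⟩
  obtain ⟨k₀, k₁, k₂, hcQ₃⟩ : ∃ x y z, Matrix.vecMul Q₃.rep M⁻¹ = ![x, y, z] :=
    ⟨_, _, _, by funext j; fin_cases j <;> rfl⟩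
  obtain ⟨w₀, w₁, w₂, hcP₁⟩ : ∃ x y z, Matrix.vecMul P₁.rep M⁻¹ = ![x, y, z] :=
    ⟨_, _, _, by funext j; fin_cases j <;> rfl⟩
  obtain ⟨u₀, u₁, u₂, hcP₂⟩ : ∃ x y z, Matrix.vecMul P₂.rep M⁻¹ = ![x, y, z] :=
    ⟨_, _, _, by funext j; fin_cases j <;> rfl⟩
  -- conic equations in coordinates
  have hc1 : γ*x₁*y₁ + α*y₁*z₁ + β*x₁*z₁ = 0 := by
    have h := (hBl_eval A'.rep A'.rep).symm.trans (hself _ hA')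
    rw [hcA'] at h
    simp only [Matrix.cons_val_zero, Matrix.cons_val_one, Matrix.head_cons,
      Matrix.cons_val_two, Matrix.tail_cons] at h
    linear_combination h / 2
  have hc2 : γ*x₂*y₂ + α*y₂*z₂ + β*x₂*z₂ = 0 := by
    have h := (hBl_eval B'.rep B'.rep).symm.trans (hself _ hB')
    rw [hcB'] at h
    simp only [Matrix.cons_val_zero, Matrix.cons_val_one, Matrix.head_cons,
      Matrix.cons_val_two, Matrix.tail_cons] at h
    linear_combination h / 2
  have hc3 : γ*x₃*y₃ + α*y₃*z₃ + β*x₃*z₃ = 0 := by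
    have h := (hBl_eval C'.rep C'.rep).symm.trans (hself _ hC')
    rw [hcC'] at h
    simp only [Matrix.cons_val_zero, Matrix.cons_val_one, Matrix.head_cons,
      Matrix.cons_val_two, Matrix.tail_cons] at h
    linear_combination h / 2
  -- tangency equations in coordinates
  have ht1 : γ*w₁ + β*w₂ = 0 := by
    have h := (hBl_eval A.rep P₁.rep).symm.trans hP₁.1
    rw [co_a, hcP₁] at h
    simp only [Matrix.cons_val_zero, Matrix.cons_val_one, Matrix.head_cons,
      Matrix.cons_val_two, Matrix.tail_cons] at h
    linear_combination h
  have ht2 : γ*u₀ + α*u₂ = 0 := by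
    have h := (hBl_eval B.rep P₂.rep).symm.trans hP₂.1
    rw [co_b, hcP₂] at h
    simp only [Matrix.cons_val_zero, Matrix.cons_val_one, Matrix.head_cons,
      Matrix.cons_val_two, Matrix.tail_cons] at h
    linear_combination h
  -- collinearity equations in coordinates
  have e1 : y₁*g₂ - z₁*g₁ = 0 := by
    have h := (aux_collin M hMu A.rep A'.rep Q₁.rep).mp hQ₁.1
    rw [co_a, hcA', hcQ₁, Matrix.det_fin_three] at h
    simp only [Matrix.of_apply, Matrix.cons_val', Matrix.cons_val_zero, Matrix.cons_val_one,
      Matrix.head_cons, Matrix.empty_val', Matrix.cons_val_fin_one, Matrix.head_fin_const,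
      Matrix.cons_val_two, Matrix.tail_cons] at h
    linear_combination h
  have e2 : z₂*g₀ - x₂*g₂ = 0 := by
    have h := (aux_collin M hMu B.rep B'.rep Q₁.rep).mp hQ₁.2.1
    rw [co_b, hcB', hcQ₁, Matrix.det_fin_three] at h
    simp only [Matrix.of_apply, Matrix.cons_val', Matrix.cons_val_zero, Matrix.cons_val_one,
      Matrix.head_cons, Matrix.empty_val', Matrix.cons_val_fin_one, Matrix.head_fin_const,
      Matrix.cons_val_two, Matrix.tail_cons] at h
    linear_combination h
  have e3 : x₃*g₁ - y₃*g₀ = 0 := by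
    have h := (aux_collin M hMu C.rep C'.rep Q₁.rep).mp hQ₁.2.2
    rw [co_c, hcC', hcQ₁, Matrix.det_fin_three] at h
    simp only [Matrix.of_apply, Matrix.cons_val', Matrix.cons_val_zero, Matrix.cons_val_one,
      Matrix.head_cons, Matrix.empty_val', Matrix.cons_val_fin_one, Matrix.head_fin_const,
      Matrix.cons_val_two, Matrix.tail_cons] at h
    linear_combination h
  have e4 : y₃*k₂ - z₃*k₁ = 0 := by
    have h := (aux_collin M hMu A.rep C'.rep Q₃.rep).mp hQ₃.1
    rw [co_a, hcC', hcQ₃, Matrix.det_fin_three] at h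
    simp only [Matrix.of_apply, Matrix.cons_val', Matrix.cons_val_zero, Matrix.cons_val_one,
      Matrix.head_cons, Matrix.empty_val', Matrix.cons_val_fin_one, Matrix.head_fin_const,
      Matrix.cons_val_two, Matrix.tail_cons] at h
    linear_combination h
  have e5 : z₁*k₀ - x₁*k₂ = 0 := by
    have h := (aux_collin M hMu B.rep A'.rep Q₃.rep).mp hQ₃.2.1
    rw [co_b, hcA', hcQ₃, Matrix.det_fin_three] at h
    simp only [Matrix.of_apply, Matrix.cons_val', Matrix.cons_val_zero, Matrix.cons_val_one,
      Matrix.head_cons, Matrix.empty_val', Matrix.cons_val_fin_one, Matrix.head_fin_const,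
      Matrix.cons_val_two, Matrix.tail_cons] at h
    linear_combination h
  have e6 : x₂*k₁ - y₂*k₀ = 0 := by
    have h := (aux_collin M hMu C.rep B'.rep Q₃.rep).mp hQ₃.2.2
    rw [co_c, hcB', hcQ₃, Matrix.det_fin_three] at h
    simp only [Matrix.of_apply, Matrix.cons_val', Matrix.cons_val_zero, Matrix.cons_val_one,
      Matrix.head_cons, Matrix.empty_val', Matrix.cons_val_fin_one, Matrix.head_fin_const,
      Matrix.cons_val_two, Matrix.tail_cons] at h
    linear_combination h
  have hw0 : w₀ = 0 := by
    have h := (aux_collin M hMu B.rep C.rep P₁.rep).mp hP₁.2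
    rw [co_b, co_c, hcP₁, Matrix.det_fin_three] at h
    simp only [Matrix.of_apply, Matrix.cons_val', Matrix.cons_val_zero, Matrix.cons_val_one,
      Matrix.head_cons, Matrix.empty_val', Matrix.cons_val_fin_one, Matrix.head_fin_const,
      Matrix.cons_val_two, Matrix.tail_cons] at h
    linear_combination h
  have hu1 : u₁ = 0 := by
    have h := (aux_collin M hMu C.rep A.rep P₂.rep).mp hP₂.2
    rw [co_c, co_a, hcP₂, Matrix.det_fin_three] at h
    simp only [Matrix.of_apply, Matrix.cons_val', Matrix.cons_val_zero, Matrix.cons_val_one,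
      Matrix.head_cons, Matrix.empty_val', Matrix.cons_val_fin_one, Matrix.head_fin_const,
      Matrix.cons_val_two, Matrix.tail_cons] at h
    linear_combination h

  -- nondegeneracy: the off-diagonal values are nonzero
  have hγne : γ ≠ 0 := by
    intro h0
    have hker : ∀ wv : Fin 3 → ℝ,
        ((QuadraticMap.polarBilin q) (α • A.rep - β • B.rep)) wv = 0 := by
      intro wv
      rw [map_sub, map_smul, map_smul, LinearMap.sub_apply, LinearMap.smul_apply,
        LinearMap.smul_apply, smul_eq_mul, smul_eq_mul, hBl_eval A.rep wv, hBl_eval B.rep wv,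
        co_a, co_b]
      simp only [Matrix.cons_val_zero, Matrix.cons_val_one, Matrix.head_cons,
        Matrix.cons_val_two, Matrix.tail_cons]
      linear_combination (α * Matrix.vecMul wv M⁻¹ 1 - β * Matrix.vecMul wv M⁻¹ 0) * h0
    have hv0 : α • A.rep - β • B.rep = 0 := hq.1 _ hker
    have hcoef := Fintype.linearIndependent_iff.mp hli ![α, -β, 0] (by
      rw [Fin.sum_univ_three]
      simp only [Matrix.cons_val_zero, Matrix.cons_val_one, Matrix.head_cons,
        Matrix.cons_val_two, Matrix.tail_cons]
      rw [zero_smul, add_zero, neg_smul, ← sub_eq_add_neg]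
      exact hv0)
    have hβ0 : β = 0 := by have := hcoef 1; simpa using this
    have hkerA : ∀ wv : Fin 3 → ℝ, ((QuadraticMap.polarBilin q) A.rep) wv = 0 := by
      intro wv
      rw [hBl_eval A.rep wv, co_a]
      simp only [Matrix.cons_val_zero, Matrix.cons_val_one, Matrix.head_cons,
        Matrix.cons_val_two, Matrix.tail_cons]
      linear_combination (Matrix.vecMul wv M⁻¹ 1) * h0 + (Matrix.vecMul wv M⁻¹ 2) * hβ0
    exact A.rep_nonzero (hq.1 _ hkerA)
  have hαne : α ≠ 0 := by
    intro h0
    have hker : ∀ wv : Fin 3 → ℝ,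
        ((QuadraticMap.polarBilin q) (γ • C.rep - β • B.rep)) wv = 0 := by
      intro wv
      rw [map_sub, map_smul, map_smul, LinearMap.sub_apply, LinearMap.smul_apply,
        LinearMap.smul_apply, smul_eq_mul, smul_eq_mul, hBl_eval C.rep wv, hBl_eval B.rep wv,
        co_c, co_b]
      simp only [Matrix.cons_val_zero, Matrix.cons_val_one, Matrix.head_cons,
        Matrix.cons_val_two, Matrix.tail_cons]
      linear_combination (γ * Matrix.vecMul wv M⁻¹ 1 - β * Matrix.vecMul wv M⁻¹ 2) * h0
    have hv0 : γ • C.rep - β • B.rep = 0 := hq.1 _ hker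
    have hcoef := Fintype.linearIndependent_iff.mp hli ![0, -β, γ] (by
      rw [Fin.sum_univ_three]
      simp only [Matrix.cons_val_zero, Matrix.cons_val_one, Matrix.head_cons,
        Matrix.cons_val_two, Matrix.tail_cons]
      rw [zero_smul, zero_add, neg_smul, add_comm, ← sub_eq_add_neg]
      exact hv0)
    have hγ0 : γ = 0 := by have := hcoef 2; simpa using this
    have hkerB : ∀ wv : Fin 3 → ℝ, ((QuadraticMap.polarBilin q) B.rep) wv = 0 := by
      intro wv
      rw [hBl_eval B.rep wv, co_b]
      simp only [Matrix.cons_val_zero, Matrix.cons_val_one, Matrix.head_cons,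
        Matrix.cons_val_two, Matrix.tail_cons]
      linear_combination (Matrix.vecMul wv M⁻¹ 0) * hγ0 + (Matrix.vecMul wv M⁻¹ 2) * h0
    exact B.rep_nonzero (hq.1 _ hkerB)
  have hβne : β ≠ 0 := by
    intro h0
    have hker : ∀ wv : Fin 3 → ℝ,
        ((QuadraticMap.polarBilin q) (γ • C.rep - α • A.rep)) wv = 0 := by
      intro wv
      rw [map_sub, map_smul, map_smul, LinearMap.sub_apply, LinearMap.smul_apply,
        LinearMap.smul_apply, smul_eq_mul, smul_eq_mul, hBl_eval C.rep wv, hBl_eval A.rep wv,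
        co_c, co_a]
      simp only [Matrix.cons_val_zero, Matrix.cons_val_one, Matrix.head_cons,
        Matrix.cons_val_two, Matrix.tail_cons]
      linear_combination (γ * Matrix.vecMul wv M⁻¹ 0 - α * Matrix.vecMul wv M⁻¹ 2) * h0
    have hv0 : γ • C.rep - α • A.rep = 0 := hq.1 _ hker
    have hcoef := Fintype.linearIndependent_iff.mp hli ![-α, 0, γ] (by
      rw [Fin.sum_univ_three]
      simp only [Matrix.cons_val_zero, Matrix.cons_val_one, Matrix.head_cons,
        Matrix.cons_val_two, Matrix.tail_cons]
      rw [zero_smul, add_zero, neg_smul, add_comm, ← sub_eq_add_neg]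
      exact hv0)
    have hα0 : α = 0 := by have := hcoef 0; simpa using this
    have hkerC : ∀ wv : Fin 3 → ℝ, ((QuadraticMap.polarBilin q) C.rep) wv = 0 := by
      intro wv
      rw [hBl_eval C.rep wv, co_c]
      simp only [Matrix.cons_val_zero, Matrix.cons_val_one, Matrix.head_cons,
        Matrix.cons_val_two, Matrix.tail_cons]
      linear_combination (Matrix.vecMul wv M⁻¹ 1) * hα0 + (Matrix.vecMul wv M⁻¹ 0) * h0
    exact C.rep_nonzero (hq.1 _ hkerC)
  -- all coordinates of A', B', C' are nonzero
  have hx1 : x₁ ≠ 0 := by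
    intro h0
    have h' : α*(y₁*z₁) = 0 := by linear_combination hc1 - (γ*y₁ + β*z₁)*h0
    rcases mul_eq_zero.mp ((mul_eq_zero.mp h').resolve_left hαne) with h1 | h1
    · exact hCA' (point_eqC A' (by rw [hcA']; simp [h0]) (by rw [hcA']; simp [h1])).symm
    · exact hBA' (point_eqB A' (by rw [hcA']; simp [h0]) (by rw [hcA']; simp [h1])).symm
  have hy1 : y₁ ≠ 0 := by
    intro h0
    have h' : β*(x₁*z₁) = 0 := by linear_combination hc1 - (γ*x₁ + α*z₁)*h0
    rcases mul_eq_zero.mp ((mul_eq_zero.mp h').resolve_left hβne) with h1 | h1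
    · exact hCA' (point_eqC A' (by rw [hcA']; simp [h1]) (by rw [hcA']; simp [h0])).symm
    · exact hAA' (point_eqA A' (by rw [hcA']; simp [h0]) (by rw [hcA']; simp [h1])).symm
  have hz1 : z₁ ≠ 0 := by
    intro h0
    have h' : γ*(x₁*y₁) = 0 := by linear_combination hc1 - (α*y₁ + β*x₁)*h0
    rcases mul_eq_zero.mp ((mul_eq_zero.mp h').resolve_left hγne) with h1 | h1
    · exact hBA' (point_eqB A' (by rw [hcA']; simp [h1]) (by rw [hcA']; simp [h0])).symm
    · exact hAA' (point_eqA A' (by rw [hcA']; simp [h1]) (by rw [hcA']; simp [h0])).symm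
  have hx2 : x₂ ≠ 0 := by
    intro h0
    have h' : α*(y₂*z₂) = 0 := by linear_combination hc2 - (γ*y₂ + β*z₂)*h0
    rcases mul_eq_zero.mp ((mul_eq_zero.mp h').resolve_left hαne) with h1 | h1
    · exact hCB' (point_eqC B' (by rw [hcB']; simp [h0]) (by rw [hcB']; simp [h1])).symm
    · exact hBB' (point_eqB B' (by rw [hcB']; simp [h0]) (by rw [hcB']; simp [h1])).symm
  have hy2 : y₂ ≠ 0 := by
    intro h0
    have h' : β*(x₂*z₂) = 0 := by linear_combination hc2 - (γ*x₂ + α*z₂)*h0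
    rcases mul_eq_zero.mp ((mul_eq_zero.mp h').resolve_left hβne) with h1 | h1
    · exact hCB' (point_eqC B' (by rw [hcB']; simp [h1]) (by rw [hcB']; simp [h0])).symm
    · exact hAB' (point_eqA B' (by rw [hcB']; simp [h0]) (by rw [hcB']; simp [h1])).symm
  have hz2 : z₂ ≠ 0 := by
    intro h0
    have h' : γ*(x₂*y₂) = 0 := by linear_combination hc2 - (α*y₂ + β*x₂)*h0
    rcases mul_eq_zero.mp ((mul_eq_zero.mp h').resolve_left hγne) with h1 | h1
    · exact hBB' (point_eqB B' (by rw [hcB']; simp [h1]) (by rw [hcB']; simp [h0])).symm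
    · exact hAB' (point_eqA B' (by rw [hcB']; simp [h1]) (by rw [hcB']; simp [h0])).symm
  have hx3 : x₃ ≠ 0 := by
    intro h0
    have h' : α*(y₃*z₃) = 0 := by linear_combination hc3 - (γ*y₃ + β*z₃)*h0
    rcases mul_eq_zero.mp ((mul_eq_zero.mp h').resolve_left hαne) with h1 | h1
    · exact hCC' (point_eqC C' (by rw [hcC']; simp [h0]) (by rw [hcC']; simp [h1])).symm
    · exact hBC' (point_eqB C' (by rw [hcC']; simp [h0]) (by rw [hcC']; simp [h1])).symm
  have hy3 : y₃ ≠ 0 := by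
    intro h0
    have h' : β*(x₃*z₃) = 0 := by linear_combination hc3 - (γ*x₃ + α*z₃)*h0
    rcases mul_eq_zero.mp ((mul_eq_zero.mp h').resolve_left hβne) with h1 | h1
    · exact hCC' (point_eqC C' (by rw [hcC']; simp [h1]) (by rw [hcC']; simp [h0])).symm
    · exact hAC' (point_eqA C' (by rw [hcC']; simp [h0]) (by rw [hcC']; simp [h1])).symm
  have hz3 : z₃ ≠ 0 := by
    intro h0
    have h' : γ*(x₃*y₃) = 0 := by linear_combination hc3 - (α*y₃ + β*x₃)*h0
    rcases mul_eq_zero.mp ((mul_eq_zero.mp h').resolve_left hγne) with h1 | h1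
    · exact hBC' (point_eqB C' (by rw [hcC']; simp [h1]) (by rw [hcC']; simp [h0])).symm
    · exact hAC' (point_eqA C' (by rw [hcC']; simp [h1]) (by rw [hcC']; simp [h0])).symm
  -- the last coordinates of the two perspectors are nonzero
  have hg2ne : g₂ ≠ 0 := by
    intro h0
    have hg1 : g₁ = 0 := by
      have h' : z₁*g₁ = 0 := by linear_combination y₁*h0 - e1
      exact (mul_eq_zero.mp h').resolve_left hz1
    have hg0 : g₀ = 0 := by
      have h' : z₂*g₀ = 0 := by linear_combination e2 + x₂*h0
      exact (mul_eq_zero.mp h').resolve_left hz2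
    apply co_zero Q₁
    rw [hcQ₁]
    funext j; fin_cases j <;> simp [h0, hg0, hg1]
  have hk2ne : k₂ ≠ 0 := by
    intro h0
    have hk1 : k₁ = 0 := by
      have h' : z₃*k₁ = 0 := by linear_combination y₃*h0 - e4
      exact (mul_eq_zero.mp h').resolve_left hz3
    have hk0 : k₀ = 0 := by
      have h' : z₁*k₀ = 0 := by linear_combination e5 + x₁*h0
      exact (mul_eq_zero.mp h').resolve_left hz1
    apply co_zero Q₃
    rw [hcQ₃]
    funext j; fin_cases j <;> simp [h0, hk0, hk1]
  -- A' ≠ B' in coordinates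
  have hD : x₁*y₂ - x₂*y₁ ≠ 0 := by
    intro h0
    have hd1 : α*y₁ + β*x₁ ≠ 0 := by
      intro hd
      have h' : γ*(x₁*y₁) = 0 := by linear_combination hc1 - z₁*hd
      rcases mul_eq_zero.mp ((mul_eq_zero.mp h').resolve_left hγne) with h1 | h1
      exacts [hx1 h1, hy1 h1]
    have hd2 : α*y₂ + β*x₂ ≠ 0 := by
      intro hd
      have h' : γ*(x₂*y₂) = 0 := by linear_combination hc2 - z₂*hd
      rcases mul_eq_zero.mp ((mul_eq_zero.mp h').resolve_left hγne) with h1 | h1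
      exacts [hx2 h1, hy2 h1]
    have hW : x₁*z₂ - x₂*z₁ = 0 := by
      have h : (x₁*z₂ - x₂*z₁)*((α*y₁+β*x₁)*(α*y₂+β*x₂)) = 0 := by
        linear_combination (x₁*(α*y₁+β*x₁))*hc2 - (x₂*(α*y₂+β*x₂))*hc1 - (γ*β*x₁*x₂)*h0
      exact (mul_eq_zero.mp h).resolve_right (mul_ne_zero hd1 hd2)
    have hBA : B' = A' := by
      refine proj_eq B' A' (x₂/x₁) (div_ne_zero hx2 hx1) ?_
      rw [hcA', hcB']
      funext j; fin_cases j
      · show x₂ = x₂/x₁ * x₁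
        field_simp
      · show y₂ = x₂/x₁ * y₁
        field_simp
        linear_combination h0
      · show z₂ = x₂/x₁ * z₁
        field_simp
        linear_combination hW
    exact hA'B' hBA.symm
  -- products of opposite vertex coordinates agree (the perspectivity conditions)
  have hP1eq : x₂*y₃*z₁ - x₃*y₁*z₂ = 0 := by
    have h : (x₂*y₃*z₁ - x₃*y₁*z₂)*g₂ = 0 := by
      linear_combination -(y₃*z₁)*e2 - (x₃*z₂)*e1 - (z₁*z₂)*e3
    exact (mul_eq_zero.mp h).resolve_right hg2ne
  have hP2eq : x₁*y₂*z₃ - x₂*y₃*z₁ = 0 := by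
    have h : (x₁*y₂*z₃ - x₂*y₃*z₁)*k₂ = 0 := by
      linear_combination -(y₂*z₃)*e5 - (x₂*z₁)*e4 - (z₁*z₃)*e6
    exact (mul_eq_zero.mp h).resolve_right hk2ne
  obtain ⟨hE, hE'⟩ := key_alg α β γ x₁ y₁ z₁ x₂ y₂ z₂ x₃ y₃ z₃ hc1 hc2 hc3 hP1eq hP2eq
    hαne hβne hx1 hx2 hx3 hy1 hy2 hz1 hz2 hz3 hD
  have rel1 : β*γ*g₀ + γ*α*g₁ + α*β*g₂ = 0 := by
    have h : (β*γ*g₀ + γ*α*g₁ + α*β*g₂)*(z₁*z₂) = 0 := by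
      linear_combination g₂*hE + (β*γ*z₁)*e2 - (γ*α*z₂)*e1
    exact (mul_eq_zero.mp h).resolve_right (mul_ne_zero hz1 hz2)
  have rel2 : β*γ*k₀ + γ*α*k₁ + α*β*k₂ = 0 := by
    have h : (β*γ*k₀ + γ*α*k₁ + α*β*k₂)*(z₁*z₃) = 0 := by
      linear_combination k₂*hE' + (β*γ*z₃)*e5 - (γ*α*z₁)*e4
    exact (mul_eq_zero.mp h).resolve_right (mul_ne_zero hz1 hz3)
  have rel3 : β*γ*w₀ + γ*α*w₁ + α*β*w₂ = 0 := by
    linear_combination β*γ*hw0 + α*ht1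
  have rel4 : β*γ*u₀ + γ*α*u₁ + α*β*u₂ = 0 := by
    linear_combination γ*α*hu1 + β*ht2
  constructor
  · show ¬ LinearIndependent ℝ ![Q₁.rep, Q₃.rep, P₁.rep]
    refine (aux_collin M hMu Q₁.rep Q₃.rep P₁.rep).mpr ?_
    rw [hcQ₁, hcQ₃, hcP₁]
    exact aux_dep (β*γ) (γ*α) (α*β) g₀ g₁ g₂ k₀ k₁ k₂ w₀ w₁ w₂
      (mul_ne_zero hβne hγne) rel1 rel2 rel3
  · show ¬ LinearIndependent ℝ ![Q₁.rep, Q₃.rep, P₂.rep]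
    refine (aux_collin M hMu Q₁.rep Q₃.rep P₂.rep).mpr ?_
    rw [hcQ₁, hcQ₃, hcP₂]
    exact aux_dep (β*γ) (γ*α) (α*β) g₀ g₁ g₂ k₀ k₁ k₂ u₀ u₁ u₂
      (mul_ne_zero hβne hγne) rel1 rel2 rel4
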